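/- Let (T, P) be an ergodic process on a Lebesgue probability space, let 𝒯 be a Rokhlin tower for T, and let Q denote the finite partition whose elements are the levels of 𝒯 together with the intersections of the elements of P with the complement of the support of 𝒯. Then for every δ > 0 there exist n_0 ∈ ℕ and a measurable set W with μ(W) > 1 − δ such that d^P_n(x, y) ≤ d^Q_n(x, y) + 3Δ(𝒯, P) for all n > n_0 and all x, y ∈ W. -/

import Mathlib

open MeasureTheory Filter Topology Real
open scoped Classical

/-- A finite measurable ordered partition of `X`, indexed by a finite type `ι`. -/
structure FinPartition (X : Type*) [MeasurableSpace X] (ι : Type*) [Fintype ι] where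
  part : ι → Set X
  measurableSet_part : ∀ i, MeasurableSet (part i)
  disjoint_part : ∀ i j, i ≠ j → Disjoint (part i) (part j)
  iUnion_part : (⋃ i, part i) = Set.univ

namespace FinPartition

variable {X : Type*} [MeasurableSpace X] {ι : Type*} [Fintype ι]

/-- The index of the element of the partition containing `x`. -/
noncomputable def letter (P : FinPartition X ι) (x : X) : ι :=
  (Set.mem_iUnion.mp (Set.eq_univ_iff_forall.mp P.iUnion_part x)).choose

end FinPartition

/-- The `P`-`n`-name of a point `x` with respect to a transformation `T`. -/
noncomputable def pname {X : Type*} [MeasurableSpace X] {ι : Type*} [Fintype ι]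
    (T : X → X) (P : FinPartition X ι) (n : ℕ) (x : X) : Fin n → ι :=
  fun i => P.letter (T^[(i : ℕ)] x)

/-- Maximal number of coordinates of `v` and `w` that can be matched monotonically. -/
noncomputable def maxMatch {ι : Type*} {n : ℕ} (v w : Fin n → ι) : ℕ :=
  sSup {l : ℕ | ∃ a b : Fin l → Fin n, StrictMono a ∧ StrictMono b ∧ ∀ s, v (a s) = w (b s)}

/-- The modified Hamming distance (`f̄` distance) between two words of length `n`. -/
noncomputable def fbar {ι : Type*} {n : ℕ} (v w : Fin n → ι) : ℝ :=
  ((n : ℝ) - (maxMatch v w : ℝ)) / n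

/-- `f̄`-distance between the `P`-`n`-names of two points. -/
noncomputable def fbarP {X : Type*} [MeasurableSpace X] {ι : Type*} [Fintype ι]
    (T : X → X) (P : FinPartition X ι) (n : ℕ) (x y : X) : ℝ :=
  fbar (pname T P n x) (pname T P n y)

/-- The process `(T, P)` is loosely Bernoulli. -/
def LBprocess {X : Type*} [MeasurableSpace X] {ι : Type*} [Fintype ι]
    (μ : Measure X) (T : X → X) (P : FinPartition X ι) : Prop :=
  ∀ ε > (0 : ℝ), ∃ n₀ : ℕ, ∀ n > n₀, ∃ x : X,
    μ {y : X | fbarP T P n x y < ε} > ENNReal.ofReal (1 - ε)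

/-- Property `P(α, δ, n)` for the process `(T, P)`. -/
def VerifiesP {X : Type*} [MeasurableSpace X] {ι : Type*} [Fintype ι]
    (μ : Measure X) (T : X → X) (P : FinPartition X ι) (α δ : ℝ) (n : ℕ) : Prop :=
  ∃ W : Set X, MeasurableSet W ∧ μ W > ENNReal.ofReal (1 - δ) ∧
    ∀ x ∈ W, ∀ y ∈ W, fbarP T P n x y < 1 - α

/-- Entropy of the refinement `P ∨ T⁻¹P ∨ ⋯ ∨ T⁻⁽ⁿ⁻¹⁾P`. -/
noncomputable def partitionEntropyN {X : Type*} [MeasurableSpace X] {ι : Type*} [Fintype ι]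
    (μ : Measure X) (T : X → X) (P : FinPartition X ι) (n : ℕ) : ℝ :=
  ∑ w : Fin n → ι,
    Real.negMulLog (μ {x : X | ∀ i : Fin n, T^[(i : ℕ)] x ∈ P.part (w i)}).toReal

/-- Entropy of the process `(T, P)`. -/
noncomputable def processEntropy {X : Type*} [MeasurableSpace X] {ι : Type*} [Fintype ι]
    (μ : Measure X) (T : X → X) (P : FinPartition X ι) : ℝ :=
  Filter.liminf (fun n : ℕ => partitionEntropyN μ T P n / n) Filter.atTop

/-- Measure-theoretic (Kolmogorov–Sinai) entropy of `T`. -/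
noncomputable def ksEntropy {X : Type*} [MeasurableSpace X] (μ : Measure X) (T : X → X) : ℝ :=
  ⨆ m : ℕ, ⨆ P : FinPartition X (Fin m), processEntropy μ T P

/-- A Rokhlin tower for `T` with base `base` and height `height`. -/
structure RokhlinTower {X : Type*} [MeasurableSpace X] (T : X → X) where
  base : Set X
  height : ℕ
  height_pos : 0 < height
  measurableSet_base : MeasurableSet base
  disjoint_levels : ∀ i < height, ∀ j < height, i ≠ j →
    Disjoint (T^[i] '' base) (T^[j] '' base)

namespace RokhlinTower

variable {X : Type*} [MeasurableSpace X] {T : X → X}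

/-- The support of a Rokhlin tower: the union of its levels. -/
def support (𝒯 : RokhlinTower T) : Set X :=
  ⋃ i ∈ Finset.range 𝒯.height, T^[i] '' 𝒯.base

/-- The size of a Rokhlin tower: the measure of its support. -/
noncomputable def size (𝒯 : RokhlinTower T) (μ : Measure X) : ℝ :=
  (μ 𝒯.support).toReal

/-- The precision of a Rokhlin tower: `μ (F Δ T^h F)`. -/
noncomputable def prec (𝒯 : RokhlinTower T) (μ : Measure X) : ℝ :=
  (μ (symmDiff 𝒯.base (T^[𝒯.height] '' 𝒯.base))).toReal

/-- `Δ(𝒯, P)`: the infimum, over assignments of an element of `P` to each level of the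
tower, of the total measure of the parts of the levels not contained in the assigned
element.  (Each such assignment corresponds to a partition of the support of the tower
into unions of levels.) -/
noncomputable def delta {ι : Type*} [Fintype ι] (𝒯 : RokhlinTower T) (μ : Measure X)
    (P : FinPartition X ι) : ℝ :=
  ⨅ c : Fin 𝒯.height → ι,
    ∑ k : Fin 𝒯.height, (μ ((T^[(k : ℕ)] '' 𝒯.base) \ P.part (c k))).toReal

end RokhlinTower

/-- The sequence `α_n` defined by `α_0 = 0`, `α_{n+1} = α_n + δ_n` where
`δ_n = s_{n+1}² ((1 - α_n)/10)²`, for a given sequence of sizes `s`. -/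
noncomputable def alphaSeq (s : ℕ → ℝ) : ℕ → ℝ
  | 0 => 0
  | n + 1 => alphaSeq s n + s (n + 1) ^ 2 * ((1 - alphaSeq s n) / 10) ^ 2

/-- The sequence `δ_n = s_{n+1}² ((1 - α_n)/10)²`. -/
noncomputable def deltaSeq (s : ℕ → ℝ) (n : ℕ) : ℝ :=
  s (n + 1) ^ 2 * ((1 - alphaSeq s n) / 10) ^ 2

/-- `P` refines `Q` : every element of `P` is contained in some element of `Q`. -/
def Refines {X : Type*} [MeasurableSpace X] {ι κ : Type*} [Fintype ι] [Fintype κ]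
    (P : FinPartition X ι) (Q : FinPartition X κ) : Prop :=
  ∀ i, ∃ j, P.part i ⊆ Q.part j

/-- `P_n → ℰ`: every measurable set is approximated by `P_n`-measurable sets. -/
def TendsToFullSigma {X : Type*} [MeasurableSpace X] (μ : Measure X) {msz : ℕ → ℕ}
    (P : (n : ℕ) → FinPartition X (Fin (msz n))) : Prop :=
  ∀ A : Set X, MeasurableSet A → ∃ B : ℕ → Set X,
    (∀ n, ∃ s : Finset (Fin (msz n)), B n = ⋃ i ∈ s, (P n).part i) ∧
    Tendsto (fun n => μ (symmDiff (B n) A)) atTop (nhds 0)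

/-- A (zero-entropy) automorphism is loosely Bernoulli if there is a refining sequence of
finite measurable partitions generating the σ-algebra for which all associated processes
are loosely Bernoulli. -/
def LBmap {X : Type*} [MeasurableSpace X] (μ : Measure X) (T : X → X) : Prop :=
  ∃ (msz : ℕ → ℕ) (P : (n : ℕ) → FinPartition X (Fin (msz n))),
    (∀ n, Refines (P (n + 1)) (P n)) ∧ TendsToFullSigma μ P ∧ ∀ n, LBprocess μ T (P n)

/-- Weak mixing of a measure preserving transformation. -/
def WeakMixing {X : Type*} [MeasurableSpace X] (μ : Measure X) (T : X → X) : Prop :=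
  MeasurePreserving T μ μ ∧
  ∀ A B : Set X, MeasurableSet A → MeasurableSet B →
    Tendsto (fun n : ℕ => (∑ k ∈ Finset.range n,
      |(μ (A ∩ T^[k] ⁻¹' B)).toReal - (μ A).toReal * (μ B).toReal|) / n)
      atTop (nhds 0)

/-- Product of two finite partitions (ordered lexicographically). -/
def FinPartition.prod {X Y : Type*} [MeasurableSpace X] [MeasurableSpace Y]
    {ι κ : Type*} [Fintype ι] [Fintype κ]
    (P : FinPartition X ι) (Q : FinPartition Y κ) : FinPartition (X × Y) (ι × κ) where
  part := fun p => P.part p.1 ×ˢ Q.part p.2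
  measurableSet_part := fun p => (P.measurableSet_part p.1).prod (Q.measurableSet_part p.2)
  disjoint_part := by
    intro p q hpq
    have h : p.1 ≠ q.1 ∨ p.2 ≠ q.2 := by
      by_contra h
      push_neg at h
      exact hpq (Prod.ext h.1 h.2)
    rcases h with h | h
    · exact Set.disjoint_left.mpr fun a ha hb =>
        Set.disjoint_left.mp (P.disjoint_part _ _ h) ha.1 hb.1
    · exact Set.disjoint_left.mpr fun a ha hb =>
        Set.disjoint_left.mp (Q.disjoint_part _ _ h) ha.2 hb.2
  iUnion_part := by
    apply Set.eq_univ_iff_forall.mpr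
    intro a
    obtain ⟨i, hi⟩ := Set.mem_iUnion.mp (Set.eq_univ_iff_forall.mp P.iUnion_part a.1)
    obtain ⟨j, hj⟩ := Set.mem_iUnion.mp (Set.eq_univ_iff_forall.mp Q.iUnion_part a.2)
    exact Set.mem_iUnion.mpr ⟨(i, j), Set.mk_mem_prod hi hj⟩

/-- Hamming distance between the `n`-names of `x` and `y` determined by a
letter-assignment `f`. -/
noncomputable def dHam {X : Type*} {A : Type*} (T : X → X) (f : X → A) (n : ℕ)
    (x y : X) : ℝ :=
  (((Finset.range n).filter fun i => f (T^[i] x) ≠ f (T^[i] y)).card : ℝ) / n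

/-- The letter assignment associated to the partition
`Q = 𝒯 ∪ P|_{𝒯ᶜ}` : points of the tower are labelled by their level, points outside the
tower by their `P`-letter. -/
noncomputable def towerLetter {X : Type*} [MeasurableSpace X] {ι : Type*} [Fintype ι]
    {T : X → X} (𝒯 : RokhlinTower T) (P : FinPartition X ι) (z : X) : ℕ ⊕ ι :=
  if h : ∃ k, k < 𝒯.height ∧ z ∈ T^[k] '' 𝒯.base then Sum.inl (Nat.find h)
  else Sum.inr (P.letter z)

set_option linter.unusedSectionVars false
set_option linter.unusedVariables false

section Aux

variable {X : Type*} [MeasurableSpace X]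

/-- Birkhoff count of visits to `E` (as a real number). -/
noncomputable def bc (T : X → X) (E : Set X) (n : ℕ) (x : X) : ℝ :=
  ∑ i ∈ Finset.range n, E.indicator (fun _ => (1:ℝ)) (T^[i] x)

variable {T : X → X} {E : Set X}

lemma ind_nonneg (z : X) : 0 ≤ E.indicator (fun _ => (1:ℝ)) z := by
  simp [Set.indicator_apply]; split_ifs <;> norm_num

lemma ind_le_one (z : X) : E.indicator (fun _ => (1:ℝ)) z ≤ 1 := by
  simp [Set.indicator_apply]; split_ifs <;> norm_num

lemma bc_zero (x : X) : bc T E 0 x = 0 := by simp [bc]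

lemma bc_succ (n : ℕ) (x : X) :
    bc T E (n + 1) x = bc T E n (T x) + E.indicator (fun _ => (1:ℝ)) x := by
  unfold bc
  rw [Finset.sum_range_succ']
  simp [Function.iterate_succ_apply]

lemma bc_nonneg (n : ℕ) (x : X) : 0 ≤ bc T E n x :=
  Finset.sum_nonneg fun i _ => ind_nonneg _

lemma bc_le (n : ℕ) (x : X) : bc T E n x ≤ n := by
  calc bc T E n x ≤ ∑ _i ∈ Finset.range n, (1:ℝ) :=
        Finset.sum_le_sum fun i _ => ind_le_one _
    _ = n := by simp

lemma bc_meas (hT : Measurable T) (hE : MeasurableSet E) (n : ℕ) :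
    Measurable (bc T E n) :=
  Finset.measurable_sum _ fun i _ =>
    (measurable_const.indicator hE).comp (hT.iterate i)

lemma bc_eq_card (n : ℕ) (x : X) :
    bc T E n x = ((Finset.range n).filter (fun i => T^[i] x ∈ E)).card := by
  unfold bc
  simp only [Set.indicator_apply]
  rw [Finset.sum_boole]

end Aux

section Aux2

variable {X : Type*} [MeasurableSpace X]

/-- Partial maxima of the Birkhoff sums of `1_E - lam`. -/
noncomputable def mxf (T : X → X) (E : Set X) (lam : ℝ) : ℕ → X → ℝ
  | 0 => fun _ => 0
  | (N + 1) => fun x => max (mxf T E lam N x) (bc T E (N + 1) x - (N + 1) * lam)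

variable {T : X → X} {E : Set X} {lam : ℝ}

lemma mxf_nonneg (N : ℕ) (x : X) : 0 ≤ mxf T E lam N x := by
  induction N with
  | zero => simp [mxf]
  | succ N ih => exact le_trans ih (le_max_left _ _)

lemma mxf_mono (N : ℕ) (x : X) : mxf T E lam N x ≤ mxf T E lam (N + 1) x :=
  le_max_left _ _

lemma mxf_meas (hT : Measurable T) (hE : MeasurableSet E) (N : ℕ) :
    Measurable (mxf T E lam N) := by
  induction N with
  | zero => exact measurable_const
  | succ N ih => exact ih.max ((bc_meas hT hE (N + 1)).sub measurable_const)

lemma mxf_bound (N : ℕ) (x : X) : mxf T E lam N x ≤ N * (1 + |lam|) := by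
  induction N with
  | zero => simp [mxf]
  | succ N ih =>
      have h1 : bc T E (N + 1) x - ((N:ℝ) + 1) * lam ≤ ((N + 1 : ℕ):ℝ) * (1 + |lam|) := by
        have := bc_le (T := T) (E := E) (N + 1) x
        have h2 : -((N:ℝ) + 1) * lam ≤ ((N:ℝ) + 1) * |lam| := by
          nlinarith [neg_abs_le lam, abs_nonneg lam, (Nat.cast_nonneg N : (0:ℝ) ≤ N)]
        push_cast at this ⊢
        nlinarith
      have h0 : (N:ℝ) * (1 + |lam|) ≤ ((N + 1 : ℕ):ℝ) * (1 + |lam|) := by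
        push_cast; nlinarith [abs_nonneg lam]
      exact max_le (ih.trans h0) h1

lemma S_le_mxf {n N : ℕ} (h : n ≤ N) (x : X) :
    bc T E n x - n * lam ≤ mxf T E lam N x := by
  induction N with
  | zero =>
      obtain rfl : n = 0 := Nat.le_zero.mp h
      simp [bc_zero, mxf]
  | succ N ih =>
      rcases Nat.le_succ_iff.mp h with h' | h'
      · exact le_trans (ih h') (mxf_mono (T := T) (E := E) (lam := lam) N x)
      · subst h'
        simp only [mxf, Nat.succ_eq_add_one]
        push_cast
        exact le_max_right _ _

lemma mxf_succ (N : ℕ) (x : X) :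
    mxf T E lam (N + 1) x
      = max (mxf T E lam N x) (bc T E (N + 1) x - ((N + 1 : ℕ):ℝ) * lam) := by
  conv_lhs => simp only [mxf]
  norm_cast

lemma mxf_pos_iff (N : ℕ) (x : X) :
    0 < mxf T E lam N x ↔ ∃ n, n ≤ N ∧ 0 < bc T E n x - n * lam := by
  induction N with
  | zero =>
      simp only [mxf]
      constructor
      · intro h; exact absurd h (lt_irrefl 0)
      · rintro ⟨n, hn, h⟩
        obtain rfl : n = 0 := Nat.le_zero.mp hn
        simp [bc_zero] at h
  | succ N ih =>
      constructor
      · intro h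
        rcases lt_max_iff.mp h with h' | h'
        · obtain ⟨n, hn, h''⟩ := ih.mp h'
          exact ⟨n, hn.trans (Nat.le_succ N), h''⟩
        · exact ⟨N + 1, le_rfl, by exact_mod_cast h'⟩
      · rintro ⟨n, hn, h⟩
        rcases Nat.le_succ_iff.mp hn with h' | h'
        · exact lt_of_lt_of_le (ih.mpr ⟨n, h', h⟩) (mxf_mono N x)
        · subst h'
          exact lt_of_lt_of_le (by exact_mod_cast h) (le_max_right _ _)

lemma mxf_key (N : ℕ) (x : X) :
    mxf T E lam (N + 1) x ≤
      max 0 (E.indicator (fun _ => (1:ℝ)) x - lam + mxf T E lam N (T x)) := by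
  induction N generalizing x with
  | zero =>
      rw [mxf_succ]
      simp only [mxf]
      rw [bc_succ, bc_zero]
      exact max_le_max le_rfl (le_of_eq (by push_cast; ring))
  | succ N ih =>
      rw [mxf_succ]
      refine max_le ((ih x).trans
        (max_le_max le_rfl (add_le_add_right (mxf_mono N (T x)) _))) ?_
      have heq : bc T E (N + 1 + 1) x - ((N + 1 + 1 : ℕ):ℝ) * lam
          = E.indicator (fun _ => (1:ℝ)) x - lam
            + (bc T E (N + 1) (T x) - ((N + 1 : ℕ):ℝ) * lam) := by
        rw [bc_succ]; push_cast; ring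
      rw [heq]
      exact le_trans (add_le_add_right (S_le_mxf le_rfl (T x)) _) (le_max_right _ _)

end Aux2

section Aux3

variable {X : Type*} [MeasurableSpace X] {μ : MeasureTheory.Measure X}
variable {T : X → X} {E : Set X}

lemma f_int [IsFiniteMeasure μ] (hE : MeasurableSet E) (lam : ℝ) :
    Integrable (fun x => E.indicator (fun _ => (1:ℝ)) x - lam) μ :=
  ((integrable_const (1:ℝ)).indicator hE).sub (integrable_const lam)

lemma mxf_int [IsFiniteMeasure μ] (hT : Measurable T) (hE : MeasurableSet E)
    (lam : ℝ) (N : ℕ) : Integrable (mxf T E lam N) μ := by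
  refine Integrable.mono' (integrable_const ((N:ℝ) * (1 + |lam|)))
    (mxf_meas hT hE N).aestronglyMeasurable (ae_of_all _ fun x => ?_)
  rw [Real.norm_eq_abs, abs_of_nonneg (mxf_nonneg N x)]
  exact mxf_bound N x

lemma mxfT_int [IsFiniteMeasure μ] (hpres : MeasurePreserving T μ μ)
    (hE : MeasurableSet E) (lam : ℝ) (N : ℕ) :
    Integrable (fun x => mxf T E lam N (T x)) μ :=
  hpres.integrable_comp ((mxf_meas hpres.measurable hE N).aestronglyMeasurable) |>.mpr
    (mxf_int hpres.measurable hE lam N)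

lemma maximal [IsFiniteMeasure μ] (hpres : MeasurePreserving T μ μ)
    (hE : MeasurableSet E) (lam : ℝ) (N : ℕ) :
    0 ≤ ∫ x in {x | 0 < mxf T E lam N x},
        (E.indicator (fun _ => (1:ℝ)) x - lam) ∂μ := by
  have hT := hpres.measurable
  cases N with
  | zero =>
      have hempty : {x : X | 0 < mxf T E lam 0 x} = ∅ := by
        ext x; simp [mxf]
      rw [hempty, Measure.restrict_empty, integral_zero_measure]
  | succ N =>
      set f : X → ℝ := fun x => E.indicator (fun _ => (1:ℝ)) x - lam with hf
      set A : Set X := {x | 0 < mxf T E lam (N + 1) x} with hA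
      have hAmeas : MeasurableSet A :=
        measurableSet_lt measurable_const (mxf_meas hT hE (N + 1))
      have hfint : Integrable f μ := f_int hE lam
      have hM1 := mxf_int (μ := μ) hT hE lam (N + 1)
      have hMN := mxf_int (μ := μ) hT hE lam N
      have hMT := mxfT_int hpres hE lam N
      have hA1 : ∀ x ∈ A, mxf T E lam (N + 1) x - mxf T E lam N (T x) ≤ f x := by
        intro x hx
        have hk := mxf_key (T := T) (E := E) (lam := lam) N x
        have h0 : (0:ℝ) < max 0 (f x + mxf T E lam N (T x)) := by
          refine lt_of_lt_of_le hx ?_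
          simpa [hf, sub_add_eq_add_sub] using hk
        have h1 : 0 < f x + mxf T E lam N (T x) := by
          rcases lt_max_iff.mp h0 with h | h
          · exact absurd h (lt_irrefl 0)
          · exact h
        have h2 : mxf T E lam (N + 1) x ≤ f x + mxf T E lam N (T x) := by
          have := hk
          rw [max_eq_right h1.le] at this
          simpa [hf, sub_add_eq_add_sub] using this
        linarith
      have h1 : ∫ x in A, (mxf T E lam (N + 1) x - mxf T E lam N (T x)) ∂μ
          ≤ ∫ x in A, f x ∂μ :=
        setIntegral_mono_on (hM1.sub hMT).integrableOn hfint.integrableOn hAmeas hA1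
      have h2 : ∫ x in A, (mxf T E lam (N + 1) x - mxf T E lam N (T x)) ∂μ
          = ∫ x in A, mxf T E lam (N + 1) x ∂μ - ∫ x in A, mxf T E lam N (T x) ∂μ :=
        integral_sub hM1.integrableOn hMT.integrableOn
      have h3 : ∫ x in A, mxf T E lam N (T x) ∂μ ≤ ∫ x, mxf T E lam N (T x) ∂μ :=
        setIntegral_le_integral hMT (ae_of_all _ fun x => mxf_nonneg N (T x))
      have h4 : ∫ x in A, mxf T E lam (N + 1) x ∂μ = ∫ x, mxf T E lam (N + 1) x ∂μ := by
        rw [← integral_add_compl hAmeas hM1]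
        have hzero : ∫ x in Aᶜ, mxf T E lam (N + 1) x ∂μ = 0 := by
          have : ∀ x ∈ Aᶜ, mxf T E lam (N + 1) x = (0:ℝ) := by
            intro x hx
            exact le_antisymm (not_lt.mp hx) (mxf_nonneg (N + 1) x)
          rw [setIntegral_congr_fun hAmeas.compl this, integral_zero]
        rw [hzero, add_zero]
      have hcomp : ∫ x, mxf T E lam N (T x) ∂μ = ∫ x, mxf T E lam N x ∂μ := by
        conv_rhs => rw [← hpres.map_eq]
        rw [integral_map hpres.measurable.aemeasurable]
        exact ((mxf_meas hT hE N).aestronglyMeasurable (μ := Measure.map T μ))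
      have h5 : ∫ x, mxf T E lam N x ∂μ ≤ ∫ x, mxf T E lam (N + 1) x ∂μ :=
        integral_mono hMN hM1 fun x => mxf_mono N x
      linarith

lemma intG [IsFiniteMeasure μ] (hpres : MeasurePreserving T μ μ)
    (hE : MeasurableSet E) (lam : ℝ) :
    0 ≤ ∫ x in {x | ∃ n, 0 < bc T E n x - n * lam},
        (E.indicator (fun _ => (1:ℝ)) x - lam) ∂μ := by
  have hT := hpres.measurable
  set s : ℕ → Set X := fun N => {x | 0 < mxf T E lam N x} with hs
  have hmeas : ∀ N, MeasurableSet (s N) := fun N =>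
    measurableSet_lt measurable_const (mxf_meas hT hE N)
  have hmono : Monotone s := monotone_nat_of_le_succ fun N x hx =>
    lt_of_lt_of_le hx (mxf_mono N x)
  have hunion : (⋃ N, s N) = {x | ∃ n, 0 < bc T E n x - n * lam} := by
    ext x
    simp only [Set.mem_iUnion, hs, Set.mem_setOf_eq, mxf_pos_iff]
    constructor
    · rintro ⟨N, n, _, h⟩; exact ⟨n, h⟩
    · rintro ⟨n, h⟩; exact ⟨n, n, le_rfl, h⟩
  have htend := tendsto_setIntegral_of_monotone hmeas hmono
    ((f_int (μ := μ) hE lam).integrableOn)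
  rw [hunion] at htend
  exact ge_of_tendsto' htend fun N => maximal hpres hE lam N

end Aux3

section Aux4

lemma limsup_le_limsup_aux {u v : ℕ → ℝ} (hub : ∀ n, |u n| ≤ 1) (hvb : ∀ n, |v n| ≤ 1)
    (h : Filter.Tendsto (fun n => v n - u n) Filter.atTop (nhds 0)) :
    Filter.limsup v Filter.atTop ≤ Filter.limsup u Filter.atTop := by
  refine le_of_forall_pos_le_add fun ε hε => ?_
  have hev : ∀ᶠ n in Filter.atTop, v n ≤ u n + ε := by
    have h2 : ∀ᶠ n in Filter.atTop, ‖v n - u n‖ < ε :=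
      (NormedAddCommGroup.tendsto_nhds_zero.mp h) ε hε
    filter_upwards [h2] with n hn
    rw [Real.norm_eq_abs, abs_lt] at hn
    linarith [hn.2]
  have hcu : Filter.IsCoboundedUnder (· ≤ ·) Filter.atTop v :=
    (Filter.isBoundedUnder_of ⟨-1, fun n => (abs_le.mp (hvb n)).1⟩ :
      Filter.IsBoundedUnder (· ≥ ·) Filter.atTop v).isCoboundedUnder_le
  have hbu : Filter.IsBoundedUnder (· ≤ ·) Filter.atTop (fun n => u n + ε) :=
    Filter.isBoundedUnder_of ⟨1 + ε, fun n => add_le_add_left (abs_le.mp (hub n)).2 ε⟩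
  calc Filter.limsup v Filter.atTop
      ≤ Filter.limsup (fun n => u n + ε) Filter.atTop := Filter.limsup_le_limsup hev hcu hbu
    _ = Filter.limsup u Filter.atTop + ε := by
        refine limsup_add_const Filter.atTop u ε ?_ ?_
        · exact Filter.isBoundedUnder_of ⟨1, fun n => (abs_le.mp (hub n)).2⟩
        · exact (Filter.isBoundedUnder_of ⟨-1, fun n => (abs_le.mp (hub n)).1⟩ :
            Filter.IsBoundedUnder (· ≥ ·) Filter.atTop u).isCoboundedUnder_le

lemma limsup_eq_limsup_aux {u v : ℕ → ℝ} (hub : ∀ n, |u n| ≤ 1) (hvb : ∀ n, |v n| ≤ 1)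
    (h : Filter.Tendsto (fun n => v n - u n) Filter.atTop (nhds 0)) :
    Filter.limsup v Filter.atTop = Filter.limsup u Filter.atTop := by
  refine le_antisymm (limsup_le_limsup_aux hub hvb h) (limsup_le_limsup_aux hvb hub ?_)
  have := h.neg
  rw [neg_zero] at this
  convert this using 2 with n
  ring

end Aux4

section Aux5

open Filter

variable {X : Type*} [MeasurableSpace X] {μ : MeasureTheory.Measure X}
variable {T : X → X} {E : Set X}

lemma u_abs_le (n : ℕ) (x : X) : |bc T E n x / n| ≤ 1 := by
  rcases Nat.eq_zero_or_pos n with rfl | hn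
  · simp [bc_zero]
  · have hn' : (0:ℝ) < n := by exact_mod_cast hn
    rw [abs_of_nonneg (div_nonneg (bc_nonneg n x) hn'.le)]
    rw [div_le_one hn']
    exact bc_le n x

lemma ae_limsup_le [IsProbabilityMeasure μ] (hT : Ergodic T μ) (hE : MeasurableSet E)
    {lam : ℝ} (hlam : (μ E).toReal < lam) :
    ∀ᵐ x ∂μ, limsup (fun n => bc T E n x / n) atTop ≤ lam := by
  have hpres := hT.toMeasurePreserving
  have hTm := hpres.measurable
  have hlam0 : 0 < lam := lt_of_le_of_lt ENNReal.toReal_nonneg hlam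
  set L : X → ℝ := fun x => limsup (fun n => bc T E n x / n) atTop with hL
  have hLmeas : Measurable L :=
    Measurable.limsup fun n => (bc_meas hTm hE n).div_const n
  set D : Set X := {x | lam < L x} with hD
  have hDmeas : MeasurableSet D := measurableSet_lt measurable_const hLmeas
  -- invariance of L
  have hLT : ∀ x, L (T x) = L x := by
    intro x
    have h1 : limsup (fun n => bc T E (n + 1) x / ((n + 1 : ℕ):ℝ)) atTop = L x :=
      limsup_nat_add (fun n => bc T E n x / n) 1
    show limsup (fun n => bc T E n (T x) / (n:ℝ)) atTop = L x
    rw [← h1]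
    refine limsup_eq_limsup_aux (fun n => u_abs_le (n + 1) x) (fun n => u_abs_le n (T x)) ?_
    -- |v n - u (n+1)| ≤ 2 / n for n ≥ 1
    have hbnd : ∀ n : ℕ, 1 ≤ n →
        ‖bc T E n (T x) / (n:ℝ) - bc T E (n + 1) x / ((n + 1 : ℕ):ℝ)‖ ≤ 2 / (n:ℝ) := by
      intro n hn
      have hn' : (1:ℝ) ≤ n := by exact_mod_cast hn
      have hn0 : (0:ℝ) < n := by linarith
      have hn1 : (0:ℝ) < n + 1 := by linarith
      set a := bc T E n (T x) with ha
      set e := E.indicator (fun _ => (1:ℝ)) x with he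
      have hbc : bc T E (n + 1) x = a + e := bc_succ n x
      have ha0 : 0 ≤ a := bc_nonneg n (T x)
      have han : a ≤ n := bc_le n (T x)
      have he0 : 0 ≤ e := ind_nonneg x
      have he1 : e ≤ 1 := ind_le_one x
      have heq : a / n - (a + e) / (n + 1) = a / (n * (n + 1)) - e / (n + 1) := by
        field_simp
        ring
      push_cast
      rw [hbc, Real.norm_eq_abs, heq]
      have hp1 : a / (n * (n + 1)) ≤ 1 / n := by
        rw [div_le_div_iff₀ (by positivity) hn0]
        nlinarith
      have hp0 : 0 ≤ a / (n * (n + 1)) := by positivity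
      have hq1 : e / (n + 1) ≤ 1 / n := by
        rw [div_le_div_iff₀ hn1 hn0]
        nlinarith
      have hq0 : 0 ≤ e / (n + 1) := by positivity
      have h1n : 1 / (n:ℝ) ≤ 2 / n := by
        rw [div_le_div_iff₀ hn0 hn0]; nlinarith
      rw [abs_le]
      constructor <;> nlinarith
    have h2n : Tendsto (fun n : ℕ => 2 / (n:ℝ)) atTop (nhds 0) :=
      tendsto_const_div_atTop_nhds_zero_nat 2
    refine squeeze_zero_norm' ?_ h2n
    filter_upwards [eventually_ge_atTop 1] with n hn
    exact hbnd n hn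
  have hinv : T ⁻¹' D = D := by
    ext x
    simp only [Set.mem_preimage, hD, Set.mem_setOf_eq, hLT x]
  rcases hT.ae_empty_or_univ hDmeas hinv with hcase | hcase
  · -- μ D = 0 : done
    have hD0 : μ D = 0 := by rwa [MeasureTheory.ae_eq_empty] at hcase
    have : ∀ᵐ x ∂μ, x ∉ D := by
      rw [MeasureTheory.ae_iff]
      simpa using hD0
    filter_upwards [this] with x hx
    exact not_lt.mp hx
  · -- μ D = 1 : contradiction
    exfalso
    set G : Set X := {x | ∃ n, 0 < bc T E n x - n * lam} with hG
    have hDG : D ⊆ G := by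
      intro x hx
      have hcb : IsCoboundedUnder (· ≤ ·) atTop (fun n => bc T E n x / n) :=
        (Filter.isBoundedUnder_of ⟨-1, fun n => (abs_le.mp (u_abs_le n x)).1⟩ :
          IsBoundedUnder (· ≥ ·) atTop _).isCoboundedUnder_le
      obtain ⟨n, hn⟩ := (frequently_lt_of_lt_limsup hcb hx).exists
      have hn0 : n ≠ 0 := by
        rintro rfl
        rw [bc_zero] at hn
        simp at hn
        linarith
      have hnp : (0:ℝ) < n := by
        have := Nat.pos_of_ne_zero hn0
        exact_mod_cast this
      refine ⟨n, ?_⟩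
      have := (lt_div_iff₀ hnp).mp hn
      linarith
    have hDuniv : μ Dᶜ = 0 := by rwa [MeasureTheory.ae_eq_univ] at hcase
    have hGc : μ Gᶜ = 0 := measure_mono_null (Set.compl_subset_compl.mpr hDG) hDuniv
    have hrestr : μ.restrict G = μ := by
      refine Measure.restrict_eq_self_of_ae_mem ?_
      rw [MeasureTheory.ae_iff]
      exact hGc
    have hI := intG hpres hE lam
    rw [← hG, hrestr] at hI
    have hval : ∫ x, (E.indicator (fun _ => (1:ℝ)) x - lam) ∂μ = (μ E).toReal - lam := by
      rw [integral_sub ((integrable_const (1:ℝ)).indicator hE) (integrable_const lam)]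
      rw [MeasureTheory.integral_indicator_const (1:ℝ) hE, integral_const]
      simp [measure_univ, measureReal_def]
    rw [hval] at hI
    linarith

end Aux5

section Aux6

open Filter

variable {X : Type*} [MeasurableSpace X] {μ : MeasureTheory.Measure X}
variable {T : X → X} {E : Set X}

lemma exists_uniform [IsProbabilityMeasure μ] (hT : Ergodic T μ) (hE : MeasurableSet E)
    {β δ : ℝ} (hβ : (μ E).toReal < β) (hδ : 0 < δ) :
    ∃ (N : ℕ) (W : Set X), MeasurableSet W ∧ ENNReal.ofReal (1 - δ) < μ W ∧
      ∀ x ∈ W, ∀ n, N < n → bc T E n x / n ≤ β := by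
  have hTm := hT.toMeasurePreserving.measurable
  set lam : ℝ := ((μ E).toReal + β) / 2 with hlam
  have hlam1 : (μ E).toReal < lam := by rw [hlam]; linarith
  have hlam2 : lam < β := by rw [hlam]; linarith
  have hae := ae_limsup_le hT hE hlam1
  set W : ℕ → Set X := fun N => ⋂ k : ℕ,
    {x | bc T E (k + N + 1) x / ((k + N + 1 : ℕ):ℝ) ≤ β} with hW
  have hWmeas : ∀ N, MeasurableSet (W N) := fun N =>
    MeasurableSet.iInter fun k =>
      measurableSet_le ((bc_meas hTm hE (k + N + 1)).div_const _) measurable_const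
  have hWmono : Monotone W := by
    refine monotone_nat_of_le_succ fun N x hx => ?_
    refine Set.mem_iInter.mpr fun k => ?_
    have h := Set.mem_iInter.mp hx (k + 1)
    have he : k + 1 + N + 1 = k + (N + 1) + 1 := by omega
    rwa [he] at h
  have hcover : ∀ᵐ x ∂μ, x ∈ ⋃ N, W N := by
    filter_upwards [hae] with x hx
    have hlt : limsup (fun n => bc T E n x / n) atTop < β := lt_of_le_of_lt hx hlam2
    have hvb : IsBoundedUnder (· ≤ ·) atTop (fun n => bc T E n x / (n:ℝ)) :=
      Filter.isBoundedUnder_of ⟨1, fun n => (abs_le.mp (u_abs_le n x)).2⟩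
    have hev : ∀ᶠ n in atTop, bc T E n x / (n:ℝ) < β :=
      eventually_lt_of_limsup_lt hlt hvb
    obtain ⟨a, ha⟩ := eventually_atTop.mp hev
    refine Set.mem_iUnion.mpr ⟨a, Set.mem_iInter.mpr fun k => ?_⟩
    exact (ha (k + a + 1) (by omega)).le
  have hμunion : μ (⋃ N, W N) = 1 := by
    refine le_antisymm prob_le_one ?_
    have : (Set.univ : Set X) ≤ᵐ[μ] ⋃ N, W N := by
      filter_upwards [hcover] with x hx _ 
      exact hx
    calc (1:ENNReal) = μ Set.univ := (measure_univ).symm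
      _ ≤ μ (⋃ N, W N) := measure_mono_ae this
  have htend : Tendsto (fun N => μ (W N)) atTop (nhds 1) := by
    have := tendsto_measure_iUnion_atTop (μ := μ) hWmono
    rwa [hμunion] at this
  have hlt1 : ENNReal.ofReal (1 - δ) < 1 := by
    exact ENNReal.ofReal_lt_one.mpr (by linarith)
  obtain ⟨N, hN⟩ := (htend.eventually_const_lt hlt1).exists
  refine ⟨N, W N, hWmeas N, hN, fun x hx n hn => ?_⟩
  have h := Set.mem_iInter.mp hx (n - N - 1)
  have he : n - N - 1 + N + 1 = n := by omega
  rwa [he] at h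

lemma exists_uniform_zero [IsProbabilityMeasure μ] (hpres : MeasurePreserving T μ μ)
    (hE : MeasurableSet E) (hE0 : μ E = 0) {β δ : ℝ} (hβ : 0 ≤ β) (hδ : 0 < δ) :
    ∃ (N : ℕ) (W : Set X), MeasurableSet W ∧ ENNReal.ofReal (1 - δ) < μ W ∧
      ∀ x ∈ W, ∀ n, N < n → bc T E n x / n ≤ β := by
  set W : Set X := (⋃ i : ℕ, T^[i] ⁻¹' E)ᶜ with hW
  have hmeas : MeasurableSet (⋃ i : ℕ, T^[i] ⁻¹' E) :=
    MeasurableSet.iUnion fun i => hE.preimage (hpres.measurable.iterate i)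
  have hnull : μ (⋃ i : ℕ, T^[i] ⁻¹' E) = 0 := by
    refine measure_iUnion_null fun i => ?_
    rw [(hpres.iterate i).measure_preimage hE.nullMeasurableSet]
    exact hE0
  have hμW : μ W = 1 := by
    rw [hW, prob_compl_eq_one_sub hmeas, hnull, tsub_zero]
  have hlt1 : ENNReal.ofReal (1 - δ) < 1 := by
    exact ENNReal.ofReal_lt_one.mpr (by linarith)
  refine ⟨0, W, hmeas.compl, by rw [hμW]; exact hlt1, fun x hx n hn => ?_⟩
  have hnot : ∀ i : ℕ, T^[i] x ∉ E := by
    intro i hi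
    exact hx (Set.mem_iUnion.mpr ⟨i, hi⟩)
  have hbc : bc T E n x = 0 :=
    Finset.sum_eq_zero fun i _ => Set.indicator_of_notMem (hnot i) _
  rw [hbc, zero_div]
  exact hβ

end Aux6

section AuxPart

lemma FinPartition.mem_part_letter {X : Type*} [MeasurableSpace X] {ι : Type*} [Fintype ι]
    (P : FinPartition X ι) (x : X) : x ∈ P.part (P.letter x) :=
  (Set.mem_iUnion.mp (Set.eq_univ_iff_forall.mp P.iUnion_part x)).choose_spec

lemma FinPartition.letter_eq_of_mem {X : Type*} [MeasurableSpace X] {ι : Type*} [Fintype ι]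
    (P : FinPartition X ι) {x : X} {i : ι} (h : x ∈ P.part i) : P.letter x = i := by
  by_contra hne
  exact Set.disjoint_left.mp (P.disjoint_part _ _ hne) (P.mem_part_letter x) h

end AuxPart

/-- names and towers.  Let `(T, P)` be an ergodic process, `𝒯` a Rokhlin
tower, and `Q = 𝒯 ∪ P|_{𝒯ᶜ}` the partition whose elements are the levels of `𝒯` together
with the traces of the elements of `P` on the complement of the support of `𝒯`.  Then for
every `δ > 0` there are `n₀ ∈ ℕ` and a measurable set `W` with `μ W > 1 - δ` such that
`d^P_n(x, y) ≤ d^Q_n(x, y) + 3Δ(𝒯, P)` for all `n > n₀` and all `x, y ∈ W`. -/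
theorem names_and_towers
    {X : Type*} [MeasurableSpace X] [StandardBorelSpace X]
    (μ : MeasureTheory.Measure X) [MeasureTheory.IsProbabilityMeasure μ]
    (T : X → X) (hT : Ergodic T μ) (hbij : Function.Bijective T)
    {m : ℕ} (P : FinPartition X (Fin m)) (𝒯 : RokhlinTower T) :
    ∀ δ > (0 : ℝ), ∃ (n₀ : ℕ) (W : Set X), MeasurableSet W ∧
      μ W > ENNReal.ofReal (1 - δ) ∧
      ∀ n > n₀, ∀ x ∈ W, ∀ y ∈ W,
        dHam T P.letter n x y ≤ dHam T (towerLetter 𝒯 P) n x y + 3 * 𝒯.delta μ P := by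
  intro δ hδ
  have hTm : Measurable T := hT.toMeasurePreserving.measurable
  haveI hXne : Nonempty X := by
    by_contra h
    rw [not_nonempty_iff] at h
    have h1 : μ Set.univ = 1 := measure_univ
    rw [Set.univ_eq_empty_iff.mpr h] at h1
    simp at h1
  haveI : Nonempty (Fin m) := ⟨P.letter (Classical.arbitrary X)⟩
  obtain ⟨c, -, hc⟩ := Finset.exists_min_image (Finset.univ : Finset (Fin 𝒯.height → Fin m))
    (fun c => ∑ k : Fin 𝒯.height, (μ ((T^[(k : ℕ)] '' 𝒯.base) \ P.part (c k))).toReal)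
    ⟨Classical.arbitrary _, Finset.mem_univ _⟩
  have hdelta : 𝒯.delta μ P
      = ∑ k : Fin 𝒯.height, (μ ((T^[(k : ℕ)] '' 𝒯.base) \ P.part (c k))).toReal := by
    unfold RokhlinTower.delta
    exact le_antisymm (ciInf_le ((Set.finite_range _).bddBelow) c)
      (le_ciInf fun c' => hc c' (Finset.mem_univ c'))
  set Δ := 𝒯.delta μ P with hΔdef
  have hΔ0 : 0 ≤ Δ := by
    rw [hdelta]
    exact Finset.sum_nonneg fun k _ => ENNReal.toReal_nonneg
  have hTemb : ∀ k : ℕ, MeasurableEmbedding (T^[k]) := fun k =>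
    (hTm.iterate k).measurableEmbedding (hbij.injective.iterate k)
  set B : Fin 𝒯.height → Set X := fun k => (T^[(k : ℕ)] '' 𝒯.base) \ P.part (c k) with hB
  have hBmeas : ∀ k, MeasurableSet (B k) := fun k =>
    ((hTemb (k : ℕ)).measurableSet_image' 𝒯.measurableSet_base).diff (P.measurableSet_part _)
  set E := ⋃ k, B k with hE
  have hEmeas : MeasurableSet E := MeasurableSet.iUnion hBmeas
  have hEΔ : (μ E).toReal ≤ Δ := by
    have h1 : μ E ≤ ∑ k, μ (B k) := measure_iUnion_fintype_le μ B
    have h2 : (∑ k, μ (B k)) ≠ ⊤ :=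
      (ENNReal.sum_lt_top.mpr fun k _ => measure_lt_top μ _).ne
    calc (μ E).toReal ≤ (∑ k, μ (B k)).toReal := ENNReal.toReal_mono h2 h1
      _ = ∑ k, (μ (B k)).toReal := ENNReal.toReal_sum fun k _ => (measure_lt_top μ _).ne
      _ = Δ := hdelta.symm
  have hmain : ∃ (N : ℕ) (W : Set X), MeasurableSet W ∧ ENNReal.ofReal (1 - δ) < μ W ∧
      ∀ x ∈ W, ∀ n, N < n → bc T E n x / n ≤ 3 / 2 * Δ := by
    rcases eq_or_lt_of_le hΔ0 with h0 | hpos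
    · have h1 : (μ E).toReal = 0 :=
        le_antisymm (by rw [← h0] at hEΔ; exact hEΔ) ENNReal.toReal_nonneg
      have hE0 : μ E = 0 := by
        rcases ENNReal.toReal_eq_zero_iff _ |>.mp h1 with h | h
        · exact h
        · exact absurd h (measure_lt_top μ _).ne
      exact exists_uniform_zero hT.toMeasurePreserving hEmeas hE0 (by linarith) hδ
    · exact exists_uniform hT hEmeas (by linarith) hδ
  obtain ⟨N, W, hWmeas, hWμ, hWfreq⟩ := hmain
  refine ⟨N, W, hWmeas, hWμ, ?_⟩
  intro n hn x hx y hy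
  have hkey : ∀ z z' : X, towerLetter 𝒯 P z = towerLetter 𝒯 P z' →
      P.letter z ≠ P.letter z' → z ∈ E ∨ z' ∈ E := by
    intro z z' htw hne
    unfold towerLetter at htw
    by_cases hz : ∃ k, k < 𝒯.height ∧ z ∈ T^[k] '' 𝒯.base
    · by_cases hz' : ∃ k, k < 𝒯.height ∧ z' ∈ T^[k] '' 𝒯.base
      · rw [dif_pos hz, dif_pos hz'] at htw
        have hkk : Nat.find hz = Nat.find hz' := by
          simpa using htw
        have hk := Nat.find_spec hz
        have hk' := Nat.find_spec hz'
        set kf : Fin 𝒯.height := ⟨Nat.find hz, hk.1⟩ with hkf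
        have hzmem : z ∈ T^[(kf : ℕ)] '' 𝒯.base := hk.2
        have hz'mem : z' ∈ T^[(kf : ℕ)] '' 𝒯.base := by
          have := hk'.2
          rw [hkf]
          exact (by rw [hkk]; exact this : z' ∈ T^[Nat.find hz] '' 𝒯.base)
        by_cases hp : z ∈ P.part (c kf)
        · by_cases hp' : z' ∈ P.part (c kf)
          · exact absurd (by rw [P.letter_eq_of_mem hp, P.letter_eq_of_mem hp']) hne
          · exact Or.inr (Set.mem_iUnion.mpr ⟨kf, hz'mem, hp'⟩)
        · exact Or.inl (Set.mem_iUnion.mpr ⟨kf, hzmem, hp⟩)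
      · rw [dif_pos hz, dif_neg hz'] at htw
        exact absurd htw (by simp)
    · by_cases hz' : ∃ k, k < 𝒯.height ∧ z' ∈ T^[k] '' 𝒯.base
      · rw [dif_neg hz, dif_pos hz'] at htw
        exact absurd htw (by simp)
      · rw [dif_neg hz, dif_neg hz'] at htw
        have : P.letter z = P.letter z' := by simpa using htw
        exact absurd this hne
  have hnpos : 0 < n := Nat.lt_of_le_of_lt (Nat.zero_le N) hn
  have hnR : (0:ℝ) < n := by exact_mod_cast hnpos
  classical
  set FP := (Finset.range n).filter
    (fun i => P.letter (T^[i] x) ≠ P.letter (T^[i] y)) with hFP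
  set FQ := (Finset.range n).filter
    (fun i => towerLetter 𝒯 P (T^[i] x) ≠ towerLetter 𝒯 P (T^[i] y)) with hFQ
  set FX := (Finset.range n).filter (fun i => T^[i] x ∈ E) with hFX
  set FY := (Finset.range n).filter (fun i => T^[i] y ∈ E) with hFY
  have hsub : FP ⊆ (FQ ∪ FX) ∪ FY := by
    intro i hi
    rw [hFP, Finset.mem_filter] at hi
    by_cases hq : towerLetter 𝒯 P (T^[i] x) = towerLetter 𝒯 P (T^[i] y)
    · rcases hkey _ _ hq hi.2 with h | h
      · exact Finset.mem_union_left _ (Finset.mem_union_right _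
          (Finset.mem_filter.mpr ⟨hi.1, h⟩))
      · exact Finset.mem_union_right _ (Finset.mem_filter.mpr ⟨hi.1, h⟩)
    · exact Finset.mem_union_left _ (Finset.mem_union_left _
        (Finset.mem_filter.mpr ⟨hi.1, hq⟩))
  have hcard : (FP.card : ℝ) ≤ (FQ.card : ℝ) + FX.card + FY.card := by
    have h1 : FP.card ≤ ((FQ ∪ FX) ∪ FY).card := Finset.card_le_card hsub
    have h2 : ((FQ ∪ FX) ∪ FY).card ≤ (FQ ∪ FX).card + FY.card := Finset.card_union_le _ _
    have h3 : (FQ ∪ FX).card ≤ FQ.card + FX.card := Finset.card_union_le _ _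
    have : FP.card ≤ FQ.card + FX.card + FY.card := by omega
    exact_mod_cast this
  have hfx : (FX.card : ℝ) / n ≤ 3 / 2 * Δ := by
    rw [hFX, ← bc_eq_card]
    exact hWfreq x hx n hn
  have hfy : (FY.card : ℝ) / n ≤ 3 / 2 * Δ := by
    rw [hFY, ← bc_eq_card]
    exact hWfreq y hy n hn
  have hdP : dHam T P.letter n x y = (FP.card : ℝ) / n := by
    rw [hFP]; unfold dHam; congr 1
    exact_mod_cast congrArg Finset.card (Finset.filter_congr_decidable _ _ _)
  have hdQ : dHam T (towerLetter 𝒯 P) n x y = (FQ.card : ℝ) / n := by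
    rw [hFQ]; unfold dHam; congr 1
    exact_mod_cast congrArg Finset.card (Finset.filter_congr_decidable _ _ _)
  rw [hdP, hdQ]
  have hstep : (FP.card : ℝ) / n
      ≤ ((FQ.card : ℝ) + (FX.card : ℝ) + (FY.card : ℝ)) / n := by gcongr
  calc (FP.card : ℝ) / n
      ≤ ((FQ.card : ℝ) + (FX.card : ℝ) + (FY.card : ℝ)) / n := hstep
    _ = (FQ.card : ℝ) / n + (FX.card : ℝ) / n + (FY.card : ℝ) / n := by
        rw [add_div, add_div]
    _ ≤ (FQ.card : ℝ) / n + 3 / 2 * Δ + 3 / 2 * Δ := by linarith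
    _ = (FQ.card : ℝ) / n + 3 * Δ := by ring
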